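/- Let R be a Dedekind domain, I a nonzero ideal of R, and M a finitely generated R-module. If R ⊕ M ≅ I ⊕ M as R-modules, then I is a principal ideal (equivalently, I ≅ R as an R-module). -/

import Mathlib

open Submodule LinearMap
open scoped nonZeroDivisors

section Split

variable {R : Type*} [CommRing R] {A B : Type*} [AddCommGroup A] [AddCommGroup B]
  [Module R A] [Module R B]

/-- A split surjection decomposes the source as kernel times target. -/
noncomputable def splitEquivAux (f : A →ₗ[R] B) (s : B →ₗ[R] A)
    (hfs : ∀ b, f (s b) = b) : A ≃ₗ[R] ↥(LinearMap.ker f) × B := by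
  have hmem : ∀ c : A, ((LinearMap.id : A →ₗ[R] A) - s ∘ₗ f) c ∈ LinearMap.ker f := by
    intro c; simp [LinearMap.mem_ker, hfs]
  refine LinearEquiv.ofLinear
    (LinearMap.prod (((LinearMap.id : A →ₗ[R] A) - s ∘ₗ f).codRestrict (LinearMap.ker f) hmem) f)
    ((LinearMap.ker f).subtype ∘ₗ (LinearMap.fst R _ B) + s ∘ₗ (LinearMap.snd R _ B)) ?_ ?_
  · apply LinearMap.ext
    rintro ⟨⟨a, ha⟩, b⟩
    have ha' : f a = 0 := ha
    refine Prod.ext (Subtype.ext ?_) ?_ <;>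
      simp [ha', hfs]
  · apply LinearMap.ext
    intro a
    simp

end Split

section Dedekind

variable {R : Type*} [CommRing R] [IsDomain R] [IsDedekindDomain R]

theorem exists_mul_eq_span (J : Ideal R) (hJ : J ≠ ⊥) :
    ∃ (J' : Ideal R) (a : R), a ≠ 0 ∧ J * J' = Ideal.span {a} := by
  classical
  let K := FractionRing R
  have hJ0 : (J : FractionalIdeal R⁰ K) ≠ 0 := by
    simpa using hJ
  obtain ⟨a, haJ, ha⟩ := Submodule.ne_bot_iff J |>.mp hJ
  have h1 : FractionalIdeal.spanSingleton R⁰ (algebraMap R K a) ≤ (J : FractionalIdeal R⁰ K) := by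
    rw [FractionalIdeal.spanSingleton_le_iff_mem]
    exact ⟨a, haJ, rfl⟩
  have hle : FractionalIdeal.spanSingleton R⁰ (algebraMap R K a) * (J : FractionalIdeal R⁰ K)⁻¹
      ≤ 1 := by
    calc FractionalIdeal.spanSingleton R⁰ (algebraMap R K a) * (J : FractionalIdeal R⁰ K)⁻¹
        ≤ (J : FractionalIdeal R⁰ K) * (J : FractionalIdeal R⁰ K)⁻¹ :=
          mul_le_mul' h1 le_rfl
      _ = 1 := mul_inv_cancel₀ hJ0
  obtain ⟨J', hJ'⟩ := FractionalIdeal.le_one_iff_exists_coeIdeal.mp hle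
  refine ⟨J', a, ha, ?_⟩
  apply FractionalIdeal.coeIdeal_injective (K := K)
  show ((J * J' : Ideal R) : FractionalIdeal R⁰ K) = ((Ideal.span {a} : Ideal R) : FractionalIdeal R⁰ K)
  rw [FractionalIdeal.coeIdeal_mul, hJ', FractionalIdeal.coeIdeal_span_singleton]
  rw [mul_comm, mul_assoc, mul_comm ((J:FractionalIdeal R⁰ K))⁻¹,
    mul_inv_cancel₀ hJ0, mul_one]

theorem projective_ideal (J : Ideal R) : Module.Projective R J := by
  classical
  rcases eq_or_ne J ⊥ with rfl | hJ
  · exact .of_basis (Module.Basis.empty (ι := Fin 0) _)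
  obtain ⟨J', a, ha, hmul⟩ := exists_mul_eq_span J hJ
  obtain ⟨T, hT⟩ : J.FG := IsNoetherian.noetherian J
  have haJJ' : a ∈ J * J' := by
    rw [hmul]; exact Submodule.mem_span_singleton_self a
  -- write `a` as a finite combination of products
  have hrep : ∃ y : R → R, (∀ t, y t ∈ J') ∧ a = ∑ t ∈ T, t * y t := by
    refine Submodule.mul_induction_on haJJ' ?_ ?_
    · intro m hm n hn
      rw [← hT] at hm
      obtain ⟨c, hc⟩ := mem_span_finset.mp hm
      refine ⟨fun t => if t ∈ T then c t * n else 0, ?_, ?_⟩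
      · intro t
        by_cases ht : t ∈ T <;> simp only [ht, if_pos, if_neg, if_true, if_false]
        · exact Ideal.mul_mem_left _ _ hn
        · exact zero_mem _
      · rw [← hc.2, Finset.sum_mul]
        refine Finset.sum_congr rfl fun t ht => ?_
        simp only [ht, if_true, smul_eq_mul]; ring
    · rintro z w ⟨y₁, hy₁, rfl⟩ ⟨y₂, hy₂, rfl⟩
      refine ⟨fun t => y₁ t + y₂ t, fun t => add_mem (hy₁ t) (hy₂ t), ?_⟩
      rw [← Finset.sum_add_distrib]
      refine Finset.sum_congr rfl fun t ht => by ring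
  obtain ⟨y, hyJ', hya⟩ := hrep
  -- the generators as elements of `J`
  let v : ↥T → ↥J := fun t => ⟨(t : R), by rw [← hT]; exact Submodule.subset_span t.2⟩
  let π : (↥T → R) →ₗ[R] ↥J := Fintype.linearCombination R v
  -- the splitting, via division by `a`
  have hdiv : ∀ (x : ↥J) (t : ↥T), ∃ r : R, r * a = y t * (x : R) := by
    intro x t
    have : y t * (x : R) ∈ Ideal.span {a} := by
      rw [← hmul, mul_comm J J']
      exact Ideal.mul_mem_mul (hyJ' t) x.2
    exact Ideal.mem_span_singleton'.mp this
  choose σ₀ hσ₀ using fun x : ↥J => fun t : ↥T => hdiv x t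
  have hσadd : ∀ x x' : ↥J, σ₀ (x + x') = σ₀ x + σ₀ x' := by
    intro x x'
    funext t
    have : (σ₀ x t + σ₀ x' t) * a = y t * ((x + x' : ↥J) : R) := by
      rw [add_mul, hσ₀ x t, hσ₀ x' t]
      push_cast; ring
    have h2 := hσ₀ (x + x') t
    simpa using mul_right_cancel₀ ha (h2.trans this.symm)
  have hσsmul : ∀ (r : R) (x : ↥J), σ₀ (r • x) = r • σ₀ x := by
    intro r x
    funext t
    have : (r * σ₀ x t) * a = y t * ((r • x : ↥J) : R) := by
      rw [mul_assoc, hσ₀ x t]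
      push_cast [smul_eq_mul]; ring
    have h2 := hσ₀ (r • x) t
    simpa using mul_right_cancel₀ ha (h2.trans this.symm)
  let σ : ↥J →ₗ[R] (↥T → R) :=
    { toFun := σ₀
      map_add' := hσadd
      map_smul' := hσsmul }
  refine Module.Projective.of_split σ π (LinearMap.ext fun x => ?_)
  -- π (σ x) = x
  apply Subtype.ext
  have hx : a * ((π (σ x) : ↥J) : R) = a * (x : R) := by
    have : ((π (σ x) : ↥J) : R) = ∑ t : ↥T, σ₀ x t * (t : R) := by
      simp only [π, Fintype.linearCombination_apply, σ]
      push_cast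
      simp [v, smul_eq_mul]
    rw [this, Finset.mul_sum]
    have : ∀ t : ↥T, a * (σ₀ x t * (t : R)) = (t : R) * y t * (x : R) := by
      intro t
      rw [← mul_assoc, mul_comm a (σ₀ x t), hσ₀ x t]; ring
    rw [Finset.sum_congr rfl fun t _ => this t]
    have hsum : ∑ t : ↥T, (t : R) * y t * (x : R) = (∑ t ∈ T, t * y t) * (x : R) := by
      rw [Finset.sum_mul, ← Finset.sum_attach T fun t => t * y t * (x : R),
        Finset.univ_eq_attach]
    rw [hsum, ← hya, mul_comm]
  exact mul_left_cancel₀ ha hx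


theorem projective_submodule_pi :
    ∀ (n : ℕ) (S : Submodule R (Fin n → R)), Module.Projective R ↥S := by
  intro n
  induction n with
  | zero =>
    intro S
    haveI : Subsingleton (Fin 0 → R) := ⟨fun a b => funext fun i => i.elim0⟩
    exact .of_basis (Module.Basis.empty (ι := Fin 0) _)
  | succ n ih =>
    intro S
    classical
    set φ : ↥S →ₗ[R] R := (LinearMap.proj (Fin.last n)) ∘ₗ S.subtype with hφ
    haveI hJ : Module.Projective R ↥(LinearMap.range φ) := projective_ideal _
    obtain ⟨σ, hσ⟩ := Module.projective_lifting_property φ.rangeRestrict LinearMap.id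
      (LinearMap.surjective_rangeRestrict φ)
    have hσ' : ∀ b, φ.rangeRestrict (σ b) = b := fun b => by
      have := LinearMap.ext_iff.mp hσ b
      exact this
    let e := splitEquivAux φ.rangeRestrict σ hσ'
    set ψ : ↥(LinearMap.ker φ.rangeRestrict) →ₗ[R] (Fin n → R) :=
      (LinearMap.pi fun i => LinearMap.proj (Fin.castSucc i)) ∘ₗ S.subtype ∘ₗ
        (LinearMap.ker φ.rangeRestrict).subtype with hψdef
    have hψ : Function.Injective ψ := by
      intro x y hxy
      apply Subtype.ext
      apply Subtype.ext
      funext i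
      refine Fin.lastCases ?_ (fun j => ?_) i
      · have hx0 : φ x.1 = 0 := by
          have := x.2
          rw [LinearMap.mem_ker] at this
          exact congrArg Subtype.val this
        have hy0 : φ y.1 = 0 := by
          have := y.2
          rw [LinearMap.mem_ker] at this
          exact congrArg Subtype.val this
        show ((x.1 : Fin (n+1) → R)) (Fin.last n) = ((y.1 : Fin (n+1) → R)) (Fin.last n)
        have hx0' : ((x.1 : Fin (n+1) → R)) (Fin.last n) = 0 := hx0
        have hy0' : ((y.1 : Fin (n+1) → R)) (Fin.last n) = 0 := hy0
        rw [hx0', hy0']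
      · exact congrFun hxy j
    haveI : Module.Projective R ↥(LinearMap.range ψ) := ih _
    haveI : Module.Projective R ↥(LinearMap.ker φ.rangeRestrict) :=
      .of_equiv (LinearEquiv.ofInjective ψ hψ).symm
    exact .of_equiv e.symm

theorem exists_injective_pi (N : Type*) [AddCommGroup N] [Module R N] [Module.Finite R N]
    [NoZeroSMulDivisors R N] :
    ∃ (n : ℕ) (f : N →ₗ[R] (Fin n → R)), Function.Injective f := by
  classical
  let K := Localization R⁰
  let L := LocalizedModule R⁰ N
  let f₀ : N →ₗ[R] L := LocalizedModule.mkLinearMap R⁰ N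
  have hf₀ : ∀ x : N, f₀ x = 0 → x = 0 := by
    intro x hx
    obtain ⟨s, hs⟩ := (IsLocalizedModule.eq_zero_iff R⁰ f₀).mp hx
    rcases smul_eq_zero.mp hs with h | h
    · exact absurd h (nonZeroDivisors.ne_zero s.2)
    · exact h
  haveI : Module.Finite K L := Module.Finite.of_isLocalizedModule R⁰ f₀
  let ι := Module.Free.ChooseBasisIndex K L
  let b : Module.Basis ι K L := Module.Free.chooseBasis K L
  let c : N →ₗ[R] (ι → K) :=
    LinearMap.pi fun i => ((b.coord i).restrictScalars R) ∘ₗ f₀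
  have hc : ∀ x : N, c x = 0 → x = 0 := by
    intro x hx
    apply hf₀
    have : ∀ i, b.repr (f₀ x) i = 0 := by
      intro i
      have := congrFun hx i
      simpa [c, Module.Basis.coord_apply] using this
    have h0 : b.repr (f₀ x) = 0 := Finsupp.ext this
    have := congrArg b.repr.symm h0
    simpa using this
  obtain ⟨t, ht⟩ : (⊤ : Submodule R N).FG := Module.Finite.fg_top
  obtain ⟨d, hd⟩ := IsLocalization.exist_integer_multiples (S := K) R⁰
    (Finset.univ : Finset (ι × ↥t)) (fun p => c (p.2 : N) p.1)
  set A : Submodule R K := LinearMap.range (Algebra.linearMap R K) with hA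
  have hdA : ∀ x : N, ∀ i : ι, (d : R) • (c x i) ∈ A := by
    have hsub : (t : Set N) ⊆ ↑(Submodule.comap ((d : R) • c)
        (Submodule.pi Set.univ fun _ : ι => A)) := by
      intro x hxt
      simp only [SetLike.mem_coe, Submodule.mem_comap, Submodule.mem_pi, Set.mem_univ,
        forall_true_left]
      intro i
      obtain ⟨r, hr⟩ := hd (i, ⟨x, hxt⟩) (Finset.mem_univ _)
      refine ⟨r, ?_⟩
      simp only [LinearMap.smul_apply, Algebra.linearMap_apply]
      rw [hr]
      simp [Algebra.smul_def]
    have htop : (⊤ : Submodule R N) ≤ Submodule.comap ((d : R) • c)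
        (Submodule.pi Set.univ fun _ : ι => A) := by
      rw [← ht]
      exact Submodule.span_le.mpr hsub
    intro x i
    have := htop (Submodule.mem_top (x := x))
    simp only [Submodule.mem_comap, Submodule.mem_pi, Set.mem_univ, forall_true_left] at this
    simpa using this i
  have hAinj : Function.Injective (Algebra.linearMap R K) := by
    intro r r' hrr'
    exact IsFractionRing.injective R K hrr'
  let eA : R ≃ₗ[R] ↥A := LinearEquiv.ofInjective (Algebra.linearMap R K) hAinj
  let g : N →ₗ[R] (ι → R) :=
    LinearMap.pi fun i => (eA.symm : ↥A →ₗ[R] R) ∘ₗ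
      LinearMap.codRestrict A ((LinearMap.proj i) ∘ₗ ((d : R) • c))
        (fun x => by simpa using hdA x i)
  have hg : Function.Injective g := by
    intro x y hxy
    rw [← sub_eq_zero]
    apply hc
    have hgz : g (x - y) = 0 := by rw [map_sub, hxy, sub_self]
    have hz : ∀ i, (d : R) • (c (x - y) i) = 0 := by
      intro i
      have h1 := congrFun hgz i
      simp only [g, LinearMap.pi_apply, LinearMap.comp_apply] at h1
      have h2 := (LinearEquiv.map_eq_zero_iff eA.symm).mp h1
      have h3 := congrArg Subtype.val h2
      simpa only [LinearMap.codRestrict_apply, LinearMap.comp_apply, LinearMap.proj_apply,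
        LinearMap.smul_apply, Pi.smul_apply, ZeroMemClass.coe_zero] using h3
    have hd0 : algebraMap R K (d : R) ≠ 0 := by
      intro h
      exact nonZeroDivisors.ne_zero d.2 (hAinj (by simpa using h))
    funext i
    have h4 := hz i
    rw [Algebra.smul_def] at h4
    exact (mul_eq_zero.mp h4).resolve_left hd0
  refine ⟨Fintype.card ι, (LinearEquiv.funCongrLeft R R (Fintype.equivFin ι).symm).toLinearMap ∘ₗ g, ?_⟩
  exact (LinearEquiv.funCongrLeft R R (Fintype.equivFin ι).symm).injective.comp hg

theorem projective_of_finite_torsionFree (N : Type*) [AddCommGroup N] [Module R N]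
    [Module.Finite R N] [NoZeroSMulDivisors R N] : Module.Projective R N := by
  obtain ⟨n, f, hf⟩ := exists_injective_pi (R := R) N
  haveI : Module.Projective R ↥(LinearMap.range f) := projective_submodule_pi n _
  exact .of_equiv (LinearEquiv.ofInjective f hf).symm

end Dedekind

section Torsion

variable {R : Type*} [CommRing R] [IsDomain R] {A B : Type*} [AddCommGroup A] [AddCommGroup B]
  [Module R A] [Module R B]

theorem torsion_prod_eq :
    Submodule.torsion R (A × B) =
      (Submodule.torsion R A).prod (Submodule.torsion R B) := by
  ext z
  constructor
  · rintro ⟨a, ha⟩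
    constructor
    · exact ⟨a, congrArg Prod.fst ha⟩
    · exact ⟨a, congrArg Prod.snd ha⟩
  · rintro ⟨⟨a, ha⟩, ⟨b, hb⟩⟩
    refine ⟨a * b, Prod.ext ?_ ?_⟩
    · show ((a * b : R⁰) : R) • z.1 = 0
      have : ((a * b : R⁰) : R) = (b : R) * (a : R) := by
        push_cast; ring
      rw [this, mul_smul]
      rw [show (a : R) • z.1 = 0 from ha, smul_zero]
    · show ((a * b : R⁰) : R) • z.2 = 0
      have : ((a * b : R⁰) : R) = (a : R) * (b : R) := by push_cast; ring
      rw [this, mul_smul]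
      rw [show (b : R) • z.2 = 0 from hb, smul_zero]

theorem torsion_map_equiv (e : A ≃ₗ[R] B) :
    Submodule.map (e : A →ₗ[R] B) (Submodule.torsion R A) = Submodule.torsion R B := by
  ext y
  constructor
  · rintro ⟨x, ⟨a, ha⟩, rfl⟩
    refine ⟨a, ?_⟩
    show (a : R) • (e x) = 0
    rw [← map_smul]
    rw [show (a : R) • x = 0 from ha, map_zero]
  · rintro ⟨a, ha⟩
    refine ⟨e.symm y, ⟨a, ?_⟩, by simp⟩
    show (a : R) • (e.symm y) = 0
    rw [← map_smul]
    rw [show (a : R) • y = 0 from ha, map_zero]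

noncomputable def quotProdEquiv (p : Submodule R A) (q : Submodule R B) :
    ((A × B) ⧸ (p.prod q)) ≃ₗ[R] (A ⧸ p) × (B ⧸ q) := by
  have hker : LinearMap.ker ((p.mkQ).prodMap (q.mkQ)) = p.prod q := by
    ext z
    simp [LinearMap.mem_ker, Prod.ext_iff, Submodule.Quotient.mk_eq_zero (p := p),
      Submodule.Quotient.mk_eq_zero (p := q), Submodule.mem_prod]
  have hsur : Function.Surjective ((p.mkQ).prodMap (q.mkQ)) := by
    intro z
    obtain ⟨x, hx⟩ := p.mkQ_surjective z.1
    obtain ⟨y, hy⟩ := q.mkQ_surjective z.2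
    exact ⟨(x, y), Prod.ext hx hy⟩
  exact (Submodule.quotEquivOfEq _ _ hker.symm).trans
    (LinearMap.quotKerEquivOfSurjective _ hsur)

end Torsion

section MatrixArg

variable {R : Type*} [CommRing R]

/-- The linear version of `Fin.cons`. -/
noncomputable def piFinSuccLEquiv (k : ℕ) (M : Type*) [AddCommGroup M] [Module R M] :
    (Fin (k+1) → M) ≃ₗ[R] M × (Fin k → M) := by
  refine LinearEquiv.ofLinear
    (LinearMap.prod (LinearMap.proj 0) (LinearMap.pi fun j => LinearMap.proj j.succ))
    (LinearMap.pi fun i => Fin.cases (LinearMap.fst R M (Fin k → M))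
      (fun j => (LinearMap.proj j) ∘ₗ LinearMap.snd R M (Fin k → M)) i) ?_ ?_
  · apply LinearMap.ext
    rintro ⟨x, c⟩
    refine Prod.ext ?_ (funext fun j => ?_)
    · simp [LinearMap.pi_apply]
    · simp [LinearMap.pi_apply]
  · apply LinearMap.ext
    intro v
    funext i
    refine Fin.cases ?_ (fun j => ?_) i <;> simp [LinearMap.pi_apply]

theorem principal_of_pi_equiv (I : Ideal R) (k : ℕ)
    (E : (Fin (k+1) → R) ≃ₗ[R] ↥I × (Fin k → R)) : Submodule.IsPrincipal I := by
  classical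
  let p : (↥I × (Fin k → R)) →ₗ[R] (Fin (k+1) → R) :=
    LinearMap.pi fun i => Fin.cases (I.subtype ∘ₗ LinearMap.fst R ↥I (Fin k → R))
      (fun j => (LinearMap.proj j) ∘ₗ LinearMap.snd R ↥I (Fin k → R)) i
  let f : (Fin (k+1) → R) →ₗ[R] (Fin (k+1) → R) := p ∘ₗ E.toLinearMap
  set A : Matrix (Fin (k+1)) (Fin (k+1)) R := LinearMap.toMatrix' f with hA
  have hfA : ∀ v, f v = A.mulVec v := by
    intro v
    rw [hA, ← Matrix.toLin'_apply, Matrix.toLin'_toMatrix']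
  have hmem : ∀ v, f v 0 ∈ I := by
    intro v
    show p (E v) 0 ∈ I
    simp only [p, LinearMap.pi_apply]
    rw [Fin.cases_zero]
    exact ((E v).1).2
  have hsur : ∀ v : Fin (k+1) → R, v 0 ∈ I → ∃ u, f u = v := by
    intro v hv
    refine ⟨E.symm (⟨v 0, hv⟩, fun j => v j.succ), ?_⟩
    show p (E (E.symm _)) = v
    rw [E.apply_symm_apply]
    funext i
    refine Fin.cases ?_ (fun j => ?_) i
    · simp only [p, LinearMap.pi_apply]; rw [Fin.cases_zero]; rfl
    · simp only [p, LinearMap.pi_apply]; rw [Fin.cases_succ]; rfl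
  set d := A.det with hd
  have hdI : d ∈ I := by
    have h1 : f (A.adjugate.mulVec (Pi.single (0 : Fin (k+1)) (1:R))) =
        d • (Pi.single (0 : Fin (k+1)) (1:R) : Fin (k+1) → R) := by
      rw [hfA, Matrix.mulVec_mulVec, Matrix.mul_adjugate, Matrix.smul_mulVec,
        Matrix.one_mulVec]
    have h2 := hmem (A.adjugate.mulVec (Pi.single (0 : Fin (k+1)) (1:R)))
    rw [h1] at h2
    simpa using h2
  refine ⟨⟨d, le_antisymm ?_ ?_⟩⟩
  · -- I ≤ span {d}
    intro x hx
    have hcols : ∀ j : Fin (k+1), ∃ u, f u =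
        Fin.cases (x • (Pi.single (0 : Fin (k+1)) (1:R) : Fin (k+1) → R))
          (fun j' => Pi.single j'.succ (1:R)) j := by
      intro j
      refine Fin.cases ?_ (fun j' => ?_) j
      · rw [Fin.cases_zero]
        apply hsur
        simpa using hx
      · rw [Fin.cases_succ]
        apply hsur
        rw [Pi.single_eq_of_ne (Fin.succ_ne_zero j').symm]
        exact zero_mem I
    choose u hu using hcols
    let B : Matrix (Fin (k+1)) (Fin (k+1)) R := Matrix.of fun i j => u j i
    have hAB : A * B = Matrix.diagonal (Fin.cons x fun _ => (1:R)) := by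
      ext i j
      have h1 : (A * B) i j = (A.mulVec (u j)) i := by
        rw [Matrix.mul_apply, Matrix.mulVec, dotProduct]
        rfl
      rw [h1, ← hfA, hu j]
      refine Fin.cases ?_ (fun j' => ?_) j
      · rw [Fin.cases_zero]
        rcases eq_or_ne i 0 with rfl | hi
        · simp [Matrix.diagonal_apply_eq]
        · rw [Matrix.diagonal_apply_ne _ hi]
          simp [Pi.single_eq_of_ne hi]
      · rw [Fin.cases_succ]
        rcases eq_or_ne i j'.succ with rfl | hi
        · simp [Matrix.diagonal_apply_eq]
        · rw [Matrix.diagonal_apply_ne _ hi]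
          exact Pi.single_eq_of_ne hi 1
    have hx' : x = d * B.det := by
      have h2 := congrArg Matrix.det hAB
      rw [Matrix.det_mul, Matrix.det_diagonal, Fin.prod_univ_succ] at h2
      simp only [Fin.cons_zero, Fin.cons_succ, Finset.prod_const_one, mul_one] at h2
      exact h2.symm
    exact Ideal.mem_span_singleton'.mpr ⟨B.det, by rw [mul_comm]; exact hx'.symm⟩
  · rw [Submodule.span_le, Set.singleton_subset_iff]
    exact hdI

end MatrixArg

/-- Cancellation: if `R` is a Dedekind domain, `I` a nonzero ideal and `M` a finitely
generated `R`-module with `R ⊕ M ≅ I ⊕ M`, then `I` is principal. -/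
theorem isPrincipal_of_prod_equiv (R : Type*) [CommRing R] [IsDomain R]
    [IsDedekindDomain R] (I : Ideal R) (hI : I ≠ ⊥) (M : Type*) [AddCommGroup M]
    [Module R M] [Module.Finite R M] (h : Nonempty ((R × M) ≃ₗ[R] (↥I × M))) :
    Submodule.IsPrincipal I := by
  classical
  obtain ⟨e⟩ := h
  set M₁ := M ⧸ Submodule.torsion R M with hM₁
  have htor : Submodule.map (e : (R × M) →ₗ[R] (↥I × M)) (Submodule.torsion R (R × M)) =
      Submodule.torsion R (↥I × M) := torsion_map_equiv e
  let q1 : ((R × M) ⧸ Submodule.torsion R (R × M)) ≃ₗ[R]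
      ((↥I × M) ⧸ Submodule.torsion R (↥I × M)) := Submodule.Quotient.equiv _ _ e htor
  have htR : Submodule.torsion R (R × M) =
      (⊥ : Submodule R R).prod (Submodule.torsion R M) := by
    rw [torsion_prod_eq]
    congr 1
    exact Submodule.isTorsionFree_iff_torsion_eq_bot.mp inferInstance
  have htI : Submodule.torsion R (↥I × M) =
      (⊥ : Submodule R ↥I).prod (Submodule.torsion R M) := by
    rw [torsion_prod_eq]
    congr 1
    exact Submodule.isTorsionFree_iff_torsion_eq_bot.mp inferInstance
  let uR : ((R × M) ⧸ Submodule.torsion R (R × M)) ≃ₗ[R] R × M₁ :=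
    ((Submodule.quotEquivOfEq _ _ htR).trans (quotProdEquiv _ _)).trans
      (LinearEquiv.prodCongr (Submodule.quotEquivOfEqBot (⊥ : Submodule R R) rfl) (LinearEquiv.refl R M₁))
  let uI : ((↥I × M) ⧸ Submodule.torsion R (↥I × M)) ≃ₗ[R] ↥I × M₁ :=
    ((Submodule.quotEquivOfEq _ _ htI).trans (quotProdEquiv _ _)).trans
      (LinearEquiv.prodCongr (Submodule.quotEquivOfEqBot (⊥ : Submodule R ↥I) rfl) (LinearEquiv.refl R M₁))
  let e₁ : (R × M₁) ≃ₗ[R] (↥I × M₁) := uR.symm.trans (q1.trans uI)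
  haveI : Module.Finite R M₁ := inferInstance
  haveI : NoZeroSMulDivisors R M₁ := ⟨fun h => by simpa using h⟩
  haveI : Module.Projective R M₁ := projective_of_finite_torsionFree M₁
  obtain ⟨k, f, g, hfsur, hginj, hfg⟩ := Module.Finite.exists_comp_eq_id_of_projective R M₁
  have hfg' : ∀ b, f (g b) = b := fun b => by simpa using LinearMap.ext_iff.mp hfg b
  let e₂ : (Fin k → R) ≃ₗ[R] ↥(LinearMap.ker f) × M₁ := splitEquivAux f g hfg'
  let E : (Fin (k+1) → R) ≃ₗ[R] ↥I × (Fin k → R) :=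
    (piFinSuccLEquiv k R).trans <|
    (LinearEquiv.prodCongr (LinearEquiv.refl R R) e₂).trans <|
    (LinearEquiv.prodCongr (LinearEquiv.refl R R)
      (LinearEquiv.prodComm R ↥(LinearMap.ker f) M₁)).trans <|
    (LinearEquiv.prodAssoc R R M₁ ↥(LinearMap.ker f)).symm.trans <|
    (LinearEquiv.prodCongr e₁ (LinearEquiv.refl R ↥(LinearMap.ker f))).trans <|
    (LinearEquiv.prodAssoc R ↥I M₁ ↥(LinearMap.ker f)).trans <|
    (LinearEquiv.prodCongr (LinearEquiv.refl R ↥I)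
      (LinearEquiv.prodComm R M₁ ↥(LinearMap.ker f))).trans
    (LinearEquiv.prodCongr (LinearEquiv.refl R ↥I) e₂.symm)
  exact principal_of_pi_equiv I k E
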